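/- Let ζ₁ and ζ₂ be two functions ℝ^d → ℝ, each Lipschitz continuous with compact support and satisfying ∑_{ξ∈ℤ^d} ζᵢ(x−ξ)(a + b·ξ) = a + b·x for all x ∈ ℝ^d, a ∈ ℝ, b ∈ ℝ^d (properties (Z1)–(Z3)). Set ζ̃ᵢ := ζᵢ ∗ ζᵢ. Then for every polynomial p : ℝ^d → ℝ of degree at most 3, the function x ↦ ∑_{ξ∈ℤ^d} p(ξ) (ζ̃₂(x−ξ) − ζ̃₁(x−ξ)) is an affine function of x (i.e. of the form c + g·x for some c ∈ ℝ, g ∈ ℝ^d). -/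

import Mathlib

open MeasureTheory ENNReal NNReal

noncomputable section

/-- The lattice `ℤ^d`. -/
abbrev ZLat (d : ℕ) := Fin d → ℤ

/-- Euclidean space `ℝ^d`. -/
abbrev Euc (d : ℕ) := EuclideanSpace ℝ (Fin d)

/-- Embedding of the lattice `ℤ^d` into `ℝ^d`. -/
def latCast {d : ℕ} (ξ : ZLat d) : Euc d := WithLp.toLp 2 (fun i => (ξ i : ℝ))

/-- Properties (Z1)–(Z3): Lipschitz, compactly supported, reproduces affine functions. -/
structure IsZ123 {d : ℕ} (ζ : Euc d → ℝ) : Prop where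
  lip : ∃ K, LipschitzWith K ζ
  cpt : HasCompactSupport ζ
  ord : ∀ (a : ℝ) (b : Euc d) (x : Euc d),
    ∑' ξ : ZLat d, ζ (x - latCast ξ) * (a + ∑ i, b i * (ξ i : ℝ)) = a + ∑ i, b i * x i

/-- The convolution `ζ̃ = ζ ∗ ζ`. -/
def convAuto {d : ℕ} (ζ : Euc d → ℝ) : Euc d → ℝ := fun x => ∫ y, ζ (x - y) * ζ y

namespace QIAux

variable {d : ℕ}

lemma latCast_apply (ξ : ZLat d) (i : Fin d) : latCast ξ i = (ξ i : ℝ) := rfl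

lemma latCast_add (ξ η : ZLat d) : latCast (ξ + η) = latCast ξ + latCast η := by
  ext i
  simp [latCast, PiLp.add_apply]

lemma latCast_neg (ξ : ZLat d) : latCast (-ξ) = -latCast ξ := by
  ext i
  simp [latCast, PiLp.neg_apply]

lemma euc_norm_eq (x : Euc d) : ‖x‖ = Real.sqrt (∑ j, (x j)^2) := by
  rw [EuclideanSpace.norm_eq]
  simp [Real.norm_eq_abs, sq_abs]

lemma coord_abs_le_norm (x : Euc d) (i : Fin d) : |x i| ≤ ‖x‖ := by
  rw [euc_norm_eq]
  calc |x i| = Real.sqrt ((x i)^2) := (Real.sqrt_sq_eq_abs _).symm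
  _ ≤ Real.sqrt (∑ j, (x j)^2) := Real.sqrt_le_sqrt
      (Finset.single_le_sum (fun j _ => sq_nonneg (x j)) (Finset.mem_univ i))

lemma finite_lat {s : Set (Euc d)} (hs : Bornology.IsBounded s) :
    {ξ : ZLat d | latCast ξ ∈ s}.Finite := by
  obtain ⟨r, hr⟩ := hs.subset_closedBall 0
  have hsub : {ξ : ZLat d | latCast ξ ∈ s} ⊆
      Set.univ.pi (fun _ : Fin d => Set.Icc (-⌈r⌉) ⌈r⌉) := by
    intro ξ hξ
    intro i _
    have h1 : ‖latCast ξ‖ ≤ r := mem_closedBall_zero_iff.mp (hr hξ)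
    have h2' := le_trans (coord_abs_le_norm (latCast ξ) i) h1
    have h2 : |(ξ i : ℝ)| ≤ r := h2'
    have h3 : |(ξ i : ℝ)| ≤ (⌈r⌉ : ℝ) := le_trans h2 (Int.le_ceil r)
    rw [← Int.cast_abs] at h3
    have h4 : |ξ i| ≤ ⌈r⌉ := by exact_mod_cast h3
    exact abs_le.mp h4
  exact Set.Finite.subset (Set.Finite.pi (fun _ => Set.finite_Icc _ _)) hsub

/-- the half open unit cell translated by `ξ` -/
def cell (ξ : ZLat d) : Set (Euc d) := {u | ∀ i, (ξ i : ℝ) ≤ u i ∧ u i < ξ i + 1}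

lemma mem_cell_iff {u : Euc d} {ξ : ZLat d} : u ∈ cell ξ ↔ ∀ i, ⌊u i⌋ = ξ i := by
  unfold cell
  constructor
  · intro h i; exact Int.floor_eq_iff.mpr (h i)
  · intro h i; exact Int.floor_eq_iff.mp (h i)

lemma floor_mem_cell (u : Euc d) : u ∈ cell (fun i => ⌊u i⌋) := by
  rw [mem_cell_iff]; intro i; rfl

lemma cell_disjoint : Pairwise (Function.onFun Disjoint (cell (d := d))) := by
  intro ξ η hne
  rw [Function.onFun, Set.disjoint_left]
  intro u hu hu'
  apply hne
  funext i
  rw [← mem_cell_iff.mp hu i, mem_cell_iff.mp hu' i]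

lemma cell_cover : (⋃ ξ : ZLat d, cell ξ) = Set.univ := by
  ext u
  simp only [Set.mem_iUnion, Set.mem_univ, iff_true]
  exact ⟨_, floor_mem_cell u⟩

lemma measurableSet_cell (ξ : ZLat d) : MeasurableSet (cell ξ) := by
  have : cell ξ = ⋂ i, ((fun u : Euc d => u i) ⁻¹' (Set.Ico (ξ i : ℝ) (ξ i + 1))) := by
    ext u
    simp [cell, Set.mem_Ico]
  rw [this]
  exact MeasurableSet.iInter fun i => (PiLp.continuous_apply 2 (fun _ : Fin d => ℝ) i).measurable measurableSet_Ico

lemma mem_cell_add {u : Euc d} (ξ : ZLat d) : u + latCast ξ ∈ cell ξ ↔ u ∈ cell (0 : ZLat d) := by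
  unfold cell
  constructor <;> intro h i <;> have := h i <;>
    simp only [PiLp.add_apply, latCast_apply, Pi.zero_apply, Int.cast_zero] at this ⊢ <;>
    constructor <;> linarith [this.1, this.2]

lemma norm_le_of_mem_cell0 {u : Euc d} (hu : u ∈ cell (0 : ZLat d)) : ‖u‖ ≤ d := by
  rw [euc_norm_eq]
  have h1 : ∑ j, (u j)^2 ≤ (d : ℝ) := by
    calc ∑ j, (u j)^2 ≤ ∑ _j : Fin d, (1:ℝ) := by
          apply Finset.sum_le_sum
          intro j _
          have := hu j
          simp only [Pi.zero_apply, Int.cast_zero] at this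
          nlinarith [this.1, this.2]
    _ = d := by simp
  have hdd : (d:ℝ) ≤ (d:ℝ)^2 := by
    rcases Nat.eq_zero_or_pos d with h|h
    · simp [h]
    · have h1 : (1:ℝ) ≤ (d:ℝ) := by exact_mod_cast h
      nlinarith
  calc Real.sqrt (∑ j, (u j)^2) ≤ Real.sqrt ((d:ℝ)^2) := Real.sqrt_le_sqrt (le_trans h1 hdd)
  _ = d := Real.sqrt_sq (Nat.cast_nonneg d)

lemma sub_floor_mem_cell0 (y : Euc d) : y - latCast (fun i => ⌊y i⌋) ∈ cell (0 : ZLat d) := by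
  intro i
  simp only [PiLp.sub_apply, latCast_apply, Pi.zero_apply, Int.cast_zero]
  constructor
  · linarith [Int.floor_le (y i)]
  · linarith [Int.lt_floor_add_one (y i)]

lemma sub_mem_cell0_iff (y : Euc d) (ξ : ZLat d) :
    y - latCast ξ ∈ cell (0 : ZLat d) ↔ ξ = fun i => ⌊y i⌋ := by
  constructor
  · intro h
    funext i
    have := mem_cell_iff.mp h i
    simp only [PiLp.sub_apply, latCast_apply, Int.floor_sub_intCast, Pi.zero_apply] at this
    omega
  · intro h; rw [h]; exact sub_floor_mem_cell0 y

lemma volume_cell0 : volume (cell (0 : ZLat d)) = 1 := by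
  have he : cell (0 : ZLat d) =
      (MeasurableEquiv.toLp 2 (Fin d → ℝ)).symm ⁻¹' (Set.univ.pi fun _ : Fin d => Set.Ico (0:ℝ) 1) := by
    ext u
    have hco : ∀ i, (MeasurableEquiv.toLp 2 (Fin d → ℝ)).symm u i = u i := fun i => rfl
    constructor
    · intro h i _
      have := h i
      simp only [Pi.zero_apply, Int.cast_zero] at this
      rw [Set.mem_Ico, hco i]
      constructor
      · exact this.1
      · linarith [this.2]
    · intro h i
      have := h i (Set.mem_univ i)
      rw [Set.mem_Ico, hco i] at this
      simp only [Pi.zero_apply, Int.cast_zero]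
      constructor
      · exact this.1
      · linarith [this.2]
  rw [he, (EuclideanSpace.volume_preserving_symm_measurableEquiv_toLp (Fin d)).measure_preimage
    ((MeasurableSet.univ_pi (fun _ => measurableSet_Ico)).nullMeasurableSet)]
  rw [volume_pi_pi]
  simp [Real.volume_Ico]


end QIAux
namespace QIAux

variable {d : ℕ}

lemma integral_comp_sub (f : Euc d → ℝ) (x : Euc d) : ∫ y, f (x - y) = ∫ y, f y := by
  have h1 : (fun y : Euc d => f (x - y)) = fun y : Euc d => (fun w => f (x + w)) (-y) := by
    funext y; simp [sub_eq_add_neg]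
  rw [h1, MeasureTheory.integral_neg_eq_self (fun w => f (x + w)) volume,
      MeasureTheory.integral_add_left_eq_self]

/-- translate a set integral over `cell ξ` to one over `cell 0` -/
lemma setIntegral_cell_translate (h : Euc d → ℝ) (ξ : ZLat d) :
    ∫ y in cell ξ, h y = ∫ u in cell (0 : ZLat d), h (u + latCast ξ) := by
  rw [← MeasureTheory.integral_indicator (measurableSet_cell ξ),
      ← MeasureTheory.integral_indicator (measurableSet_cell (0 : ZLat d))]
  rw [← MeasureTheory.integral_add_right_eq_self (fun y => (cell ξ).indicator h y) (latCast ξ)]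
  congr 1
  funext u
  by_cases hu : u ∈ cell (0 : ZLat d)
  · rw [Set.indicator_of_mem ((mem_cell_add ξ).mpr hu), Set.indicator_of_mem hu]
  · rw [Set.indicator_of_notMem (fun hc => hu ((mem_cell_add ξ).mp hc)),
        Set.indicator_of_notMem hu]

/-- Decomposition of an integral over `ℝ^d` into the unit cell, for a function whose
periodization is a finite sum indexed by `T`. -/
lemma cell_decomp (h : Euc d → ℝ) (hh : Integrable h) (T : Finset (ZLat d))
    (hT : ∀ ξ ∉ T, ∀ u ∈ cell (0 : ZLat d), h (u + latCast ξ) = 0) :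
    ∫ y, h y = ∫ u in cell (0 : ZLat d), ∑ ξ ∈ T, h (u + latCast ξ) := by
  have step1 : ∫ y, h y = ∑' ξ : ZLat d, ∫ y in cell ξ, h y := by
    rw [← MeasureTheory.setIntegral_univ, ← cell_cover]
    exact MeasureTheory.integral_iUnion measurableSet_cell cell_disjoint
      (hh.integrableOn)
  have step2 : ∀ ξ : ZLat d, ∫ y in cell ξ, h y = ∫ u in cell (0 : ZLat d), h (u + latCast ξ) :=
    fun ξ => setIntegral_cell_translate h ξ
  have step3 : ∑' ξ : ZLat d, ∫ y in cell ξ, h y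
      = ∑ ξ ∈ T, ∫ u in cell (0 : ZLat d), h (u + latCast ξ) := by
    rw [tsum_congr step2]
    apply tsum_eq_sum
    intro ξ hξ
    rw [MeasureTheory.setIntegral_congr_fun (measurableSet_cell (0 : ZLat d))
      (fun u hu => hT ξ hξ u hu), MeasureTheory.integral_zero]
  rw [step1, step3]
  rw [← MeasureTheory.integral_finset_sum]
  intro ξ _
  exact (hh.comp_add_right (latCast ξ)).integrableOn

lemma integrable_cutoff {ζ : Euc d → ℝ} (hζc : Continuous ζ) (hζs : HasCompactSupport ζ)
    (x : Euc d) {F : Euc d → ℝ} (hF : Continuous F) :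
    Integrable (fun z => ζ (x - z) * F z) := by
  have hcont : Continuous (fun z : Euc d => ζ (x - z) * F z) :=
    (hζc.comp (continuous_const.sub continuous_id)).mul hF
  apply Continuous.integrable_of_hasCompactSupport hcont
  apply HasCompactSupport.intro (K := (fun z => x - z) '' tsupport ζ)
    (hζs.image (continuous_const.sub continuous_id))
  intro z hz
  by_contra hne
  have h1 : ζ (x - z) ≠ 0 := fun hc => hne (by rw [hc, zero_mul])
  have h2 : x - z ∈ tsupport ζ := subset_tsupport ζ h1
  exact hz ⟨x - z, h2, _root_.sub_sub_cancel x z⟩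

/-- Key lemma: convolving a compactly supported function having constant lattice
periodization `c` against a `ℤ^d`-periodic function gives the constant
`c * ∫_{cell 0} M`. -/
lemma conv_periodic_const {M : Euc d → ℝ} (hMc : Continuous M)
    (hMper : ∀ (η : ZLat d) (z : Euc d), M (z + latCast η) = M z)
    {g : Euc d → ℝ} (hgc : Continuous g) (hgs : HasCompactSupport g) (c : ℝ)
    (hper : ∀ u : Euc d, ∑' ξ : ZLat d, g (u + latCast ξ) = c) (x : Euc d) :
    ∫ y, g y * M (x - y) = c * ∫ u in cell (0 : ZLat d), M u := by
  -- support radius of g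
  obtain ⟨R₀, hR₀⟩ := hgs.isBounded.subset_closedBall 0
  set R := max R₀ 0 with hRdef
  have hR : ∀ y, g y ≠ 0 → ‖y‖ ≤ R := by
    intro y hy
    have := hR₀ (subset_tsupport g hy)
    rw [mem_closedBall_zero_iff] at this
    exact le_trans this (le_max_left _ _)
  have hMper' : ∀ (η : ZLat d) (z : Euc d), M (z - latCast η) = M z := by
    intro η z
    have := hMper (-η) z
    rwa [latCast_neg, ← sub_eq_add_neg] at this
  -- finite index set
  have hfin : {ξ : ZLat d | latCast ξ ∈ Metric.closedBall (0 : Euc d) (R + d)}.Finite :=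
    finite_lat Metric.isBounded_closedBall
  set T := hfin.toFinset with hTdef
  have hmemT : ∀ (u : Euc d), u ∈ cell (0 : ZLat d) → ∀ ξ : ZLat d,
      g (u + latCast ξ) ≠ 0 → ξ ∈ T := by
    intro u hu ξ hg0
    rw [hTdef, Set.Finite.mem_toFinset, Set.mem_setOf_eq, mem_closedBall_zero_iff]
    have h1 : ‖u + latCast ξ‖ ≤ R := hR _ hg0
    have h2 : ‖u‖ ≤ d := norm_le_of_mem_cell0 hu
    calc ‖latCast ξ‖ = ‖(u + latCast ξ) - u‖ := by congr 1; abel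
    _ ≤ ‖u + latCast ξ‖ + ‖u‖ := norm_sub_le _ _
    _ ≤ R + d := add_le_add h1 h2
  -- h : the integrand
  have hint : Integrable (fun y => g y * M (x - y)) := by
    apply Continuous.integrable_of_hasCompactSupport
      (hgc.mul (hMc.comp (continuous_const.sub continuous_id)))
    exact hgs.mul_right
  have hdecomp := cell_decomp (fun y => g y * M (x - y)) hint T
    (by
      intro ξ hξ u hu
      show g (u + latCast ξ) * M (x - (u + latCast ξ)) = 0
      by_cases hg0 : g (u + latCast ξ) = 0
      · rw [hg0, zero_mul]
      · exact absurd (hmemT u hu ξ hg0) hξ)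
  rw [hdecomp]
  beta_reduce
  have hstep : ∀ u ∈ cell (0 : ZLat d),
      ∑ ξ ∈ T, g (u + latCast ξ) * M (x - (u + latCast ξ)) = c * M (x - u) := by
    intro u hu
    have h1 : ∀ ξ : ZLat d, M (x - (u + latCast ξ)) = M (x - u) := by
      intro ξ
      have : x - (u + latCast ξ) = (x - u) - latCast ξ := by abel
      rw [this, hMper']
    have h2 : ∑ ξ ∈ T, g (u + latCast ξ) * M (x - (u + latCast ξ))
        = (∑ ξ ∈ T, g (u + latCast ξ)) * M (x - u) := by
      rw [Finset.sum_mul]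
      exact Finset.sum_congr rfl (fun ξ _ => by rw [h1 ξ])
    rw [h2]
    have h3 : ∑ ξ ∈ T, g (u + latCast ξ) = c := by
      rw [← hper u]
      symm
      apply tsum_eq_sum
      intro ξ hξ
      by_contra hg0
      exact hξ (hmemT u hu ξ hg0)
    rw [h3, mul_comm]
  rw [MeasureTheory.setIntegral_congr_fun (measurableSet_cell (0 : ZLat d)) hstep]
  -- now ∫ u in cell 0, c * M (x - u) = c * ∫ u in cell 0, M u
  rw [MeasureTheory.integral_const_mul]
  congr 1
  -- ∫ u in cell 0, M (x - u) = ∫ u in cell 0, M u  (translation invariance over the torus)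
  -- via a second cell decomposition of the indicator function
  have hS : MeasurableSet {v : Euc d | x - v ∈ cell (0 : ZLat d)} := by
    have : {v : Euc d | x - v ∈ cell (0 : ZLat d)} = (fun v => x - v) ⁻¹' (cell 0) := rfl
    rw [this]
    exact (measurableSet_cell (0 : ZLat d)).preimage (measurable_const.sub measurable_id)
  set S : Set (Euc d) := {v : Euc d | x - v ∈ cell (0 : ZLat d)} with hSdef
  have hSsub : S ⊆ Metric.closedBall x d := by
    intro v hv
    rw [Metric.mem_closedBall, dist_eq_norm, ← norm_neg, neg_sub]
    exact norm_le_of_mem_cell0 hv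
  have hintS : Integrable (S.indicator M) := by
    rw [MeasureTheory.integrable_indicator_iff hS]
    exact (hMc.continuousOn.integrableOn_compact (isCompact_closedBall x d)).mono_set hSsub
  -- (a) : ∫ indicator = ∫_{cell0} M (x-u) du
  have ha : ∫ v, S.indicator M v = ∫ u in cell (0 : ZLat d), M (x - u) := by
    rw [← integral_comp_sub (S.indicator M) x]
    have : ∀ u : Euc d, S.indicator M (x - u)
        = (cell (0 : ZLat d)).indicator (fun u => M (x - u)) u := by
      intro u
      by_cases hu : u ∈ cell (0 : ZLat d)
      · have hxu : x - u ∈ S := by rw [hSdef, Set.mem_setOf_eq, _root_.sub_sub_cancel]; exact hu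
        rw [Set.indicator_of_mem hxu, Set.indicator_of_mem hu]
      · have hxu : x - u ∉ S := by
          rw [hSdef, Set.mem_setOf_eq, _root_.sub_sub_cancel]; exact hu
        rw [Set.indicator_of_notMem hxu, Set.indicator_of_notMem hu]
    have hfe : (fun u : Euc d => S.indicator M (x - u))
        = fun u => (cell (0 : ZLat d)).indicator (fun u => M (x - u)) u := funext this
    rw [integral_congr_ae (Filter.EventuallyEq.of_eq hfe),
      MeasureTheory.integral_indicator (measurableSet_cell (0 : ZLat d))]
  -- (b) : ∫ indicator = ∫_{cell0} M
  have hfin₂ : {ξ : ZLat d | latCast ξ ∈ Metric.closedBall (0 : Euc d) (‖x‖ + d + d)}.Finite :=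
    finite_lat Metric.isBounded_closedBall
  set T₂ := hfin₂.toFinset with hT₂def
  have hb : ∫ v, S.indicator M v = ∫ u in cell (0 : ZLat d), M u := by
    have hmemT₂ : ∀ (w : Euc d), w ∈ cell (0 : ZLat d) → ∀ ξ : ZLat d,
        x - (w + latCast ξ) ∈ cell (0 : ZLat d) → ξ ∈ T₂ := by
      intro w hw ξ hmem
      rw [hT₂def, Set.Finite.mem_toFinset, Set.mem_setOf_eq, mem_closedBall_zero_iff]
      have h1 : ‖x - (w + latCast ξ)‖ ≤ d := norm_le_of_mem_cell0 hmem
      have h2 : ‖w‖ ≤ d := norm_le_of_mem_cell0 hw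
      calc ‖latCast ξ‖ = ‖x - w - (x - (w + latCast ξ))‖ := by congr 1; abel
      _ ≤ ‖x - w‖ + ‖x - (w + latCast ξ)‖ := norm_sub_le _ _
      _ ≤ (‖x‖ + ‖w‖) + d := add_le_add (norm_sub_le _ _) h1
      _ ≤ ‖x‖ + d + d := by linarith
    have hdec₂ := cell_decomp (S.indicator M) hintS T₂
      (by
        intro ξ hξ w hw
        apply Set.indicator_of_notMem
        intro hmem
        exact hξ (hmemT₂ w hw ξ hmem))
    rw [hdec₂]
    apply MeasureTheory.setIntegral_congr_fun (measurableSet_cell (0 : ZLat d))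
    intro w hw
    show ∑ ξ ∈ T₂, S.indicator M (w + latCast ξ) = M w
    set ξ₀ : ZLat d := fun i => ⌊(x - w) i⌋ with hξ₀def
    have hsum : ∀ ξ ∈ T₂, S.indicator M (w + latCast ξ)
        = if ξ = ξ₀ then M w else 0 := by
      intro ξ _
      by_cases hmem : x - (w + latCast ξ) ∈ cell (0 : ZLat d)
      · have hmem' : (x - w) - latCast ξ ∈ cell (0 : ZLat d) := by
          have : (x - w) - latCast ξ = x - (w + latCast ξ) := by abel
          rw [this]; exact hmem
        have hξeq : ξ = ξ₀ := (sub_mem_cell0_iff (x - w) ξ).mp hmem'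
        have hmemS : w + latCast ξ ∈ S := hmem
        rw [if_pos hξeq, Set.indicator_of_mem hmemS]
        rw [hMper ξ w]
      · have hξne : ξ ≠ ξ₀ := by
          intro hc
          apply hmem
          have : x - (w + latCast ξ) = (x - w) - latCast ξ := by abel
          rw [this]
          exact (sub_mem_cell0_iff (x - w) ξ).mpr hc
        have hmemS : w + latCast ξ ∉ S := hmem
        rw [if_neg hξne, Set.indicator_of_notMem hmemS]
    rw [Finset.sum_congr rfl hsum, Finset.sum_ite_eq' T₂ ξ₀ (fun _ => M w)]
    rw [if_pos]
    -- ξ₀ ∈ T₂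
    rw [hT₂def, Set.Finite.mem_toFinset, Set.mem_setOf_eq, mem_closedBall_zero_iff]
    have h1 : ‖(x - w) - latCast ξ₀‖ ≤ d := norm_le_of_mem_cell0 (sub_floor_mem_cell0 (x - w))
    have h2 : ‖w‖ ≤ d := norm_le_of_mem_cell0 hw
    calc ‖latCast ξ₀‖ = ‖(x - w) - ((x - w) - latCast ξ₀)‖ := by congr 1; abel
    _ ≤ ‖x - w‖ + ‖(x - w) - latCast ξ₀‖ := norm_sub_le _ _
    _ ≤ (‖x‖ + ‖w‖) + d := add_le_add (norm_sub_le _ _) h1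
    _ ≤ ‖x‖ + d + d := by linarith
  rw [← ha, hb]

end QIAux
namespace QIAux

variable {d : ℕ}

/-! ### support finsets and summability -/

lemma support_finset {ζ : Euc d → ℝ} {R : ℝ} (hR : ∀ y, ζ y ≠ 0 → ‖y‖ ≤ R) (u : Euc d) :
    ∃ T : Finset (ZLat d), ∀ ξ ∉ T, ζ (u + latCast ξ) = 0 := by
  refine ⟨(finite_lat (s := Metric.closedBall (0 : Euc d) (R + ‖u‖))
    Metric.isBounded_closedBall).toFinset, ?_⟩
  intro ξ hξ
  by_contra h0
  apply hξ
  rw [Set.Finite.mem_toFinset, Set.mem_setOf_eq, mem_closedBall_zero_iff]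
  calc ‖latCast ξ‖ = ‖(u + latCast ξ) - u‖ := by congr 1; abel
  _ ≤ ‖u + latCast ξ‖ + ‖u‖ := norm_sub_le _ _
  _ ≤ R + ‖u‖ := by linarith [hR _ h0]

lemma support_finset_sub {ζ : Euc d → ℝ} {R : ℝ} (hR : ∀ y, ζ y ≠ 0 → ‖y‖ ≤ R) (u : Euc d) :
    ∃ T : Finset (ZLat d), ∀ ξ ∉ T, ζ (u - latCast ξ) = 0 := by
  refine ⟨(finite_lat (s := Metric.closedBall (0 : Euc d) (R + ‖u‖))
    Metric.isBounded_closedBall).toFinset, ?_⟩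
  intro ξ hξ
  by_contra h0
  apply hξ
  rw [Set.Finite.mem_toFinset, Set.mem_setOf_eq, mem_closedBall_zero_iff]
  calc ‖latCast ξ‖ = ‖u - (u - latCast ξ)‖ := by congr 1; abel
  _ ≤ ‖u‖ + ‖u - latCast ξ‖ := norm_sub_le _ _
  _ ≤ R + ‖u‖ := by linarith [hR _ h0]

lemma radius_of_cpt {ζ : Euc d → ℝ} (hc : HasCompactSupport ζ) :
    ∃ R : ℝ, 0 ≤ R ∧ ∀ y, ζ y ≠ 0 → ‖y‖ ≤ R := by
  obtain ⟨R₀, hR₀⟩ := hc.isBounded.subset_closedBall 0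
  refine ⟨max R₀ 0, le_max_right _ _, ?_⟩
  intro y hy
  have := hR₀ (subset_tsupport ζ hy)
  rw [mem_closedBall_zero_iff] at this
  exact le_trans this (le_max_left _ _)

/-! ### consequences of (Z3) -/

lemma tsum_zeta {ζ : Euc d → ℝ} (hζ : IsZ123 ζ) (z : Euc d) :
    ∑' ξ : ZLat d, ζ (z - latCast ξ) = 1 := by
  have h := hζ.ord 1 0 z
  simp only [PiLp.zero_apply, zero_mul, Finset.sum_const_zero, add_zero, mul_one] at h
  exact h

lemma tsum_zeta_coord {ζ : Euc d → ℝ} (hζ : IsZ123 ζ) (z : Euc d) (i : Fin d) :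
    ∑' ξ : ZLat d, ζ (z - latCast ξ) * (ξ i : ℝ) = z i := by
  have h := hζ.ord 0 (EuclideanSpace.single i 1) z
  simp only [EuclideanSpace.single_apply, ite_mul, one_mul, zero_mul,
    Finset.sum_ite_eq', Finset.mem_univ, if_true, zero_add] at h
  exact h

lemma tsum_zeta_shift {ζ : Euc d → ℝ} (hζ : IsZ123 ζ) (u : Euc d) :
    ∑' ξ : ZLat d, ζ (u + latCast ξ) = 1 := by
  have h := tsum_zeta hζ u
  have h2 := Equiv.tsum_eq (Equiv.neg (ZLat d)) (fun ξ => ζ (u - latCast ξ))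
  rw [← h2] at h
  rw [← h]
  apply tsum_congr
  intro ξ
  congr 1
  simp only [Equiv.neg_apply, latCast_neg, sub_neg_eq_add]

lemma tsum_zeta_coord_shift {ζ : Euc d → ℝ} (hζ : IsZ123 ζ) (u : Euc d) (i : Fin d) :
    ∑' ξ : ZLat d, ζ (u + latCast ξ) * (ξ i : ℝ) = -(u i) := by
  have h := tsum_zeta_coord hζ u i
  calc ∑' ξ : ZLat d, ζ (u + latCast ξ) * (ξ i : ℝ)
      = ∑' ξ : ZLat d,
        -((fun η : ZLat d => ζ (u - latCast η) * (η i : ℝ)) ((Equiv.neg (ZLat d)) ξ)) := by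
        apply tsum_congr
        intro ξ
        show ζ (u + latCast ξ) * (ξ i : ℝ) = -(ζ (u - latCast (-ξ)) * (((-ξ) i : ℤ) : ℝ))
        have e1 : u - latCast (-ξ) = u + latCast ξ := by rw [latCast_neg, sub_neg_eq_add]
        have e2 : (((-ξ) i : ℤ) : ℝ) = -((ξ i : ℤ) : ℝ) := by
          rw [Pi.neg_apply]; push_cast; ring
        rw [e1, e2]; ring
  _ = -∑' ξ : ZLat d, (fun η : ZLat d => ζ (u - latCast η) * (η i : ℝ)) ((Equiv.neg (ZLat d)) ξ) :=
        tsum_neg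
  _ = -(u i) := by
        rw [Equiv.tsum_eq (Equiv.neg (ZLat d)) (fun η : ZLat d => ζ (u - latCast η) * (η i : ℝ))]
        rw [h]

/-! ### the periodized moment functions M_β -/

/-- `M_β(z) = ∑_ξ ζ(z-ξ) (ξ-z)^β`, a `ℤ^d`-periodic function. -/
def MB (ζ : Euc d → ℝ) (β : Fin d → ℕ) (z : Euc d) : ℝ :=
  ∑' ξ : ZLat d, ζ (z - latCast ξ) * ∏ i, ((ξ i : ℝ) - z i) ^ β i

lemma MB_eq_sum {ζ : Euc d → ℝ} {β : Fin d → ℕ} {z : Euc d} {T : Finset (ZLat d)}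
    (hT : ∀ ξ ∉ T, ζ (z - latCast ξ) = 0) :
    MB ζ β z = ∑ ξ ∈ T, ζ (z - latCast ξ) * ∏ i, ((ξ i : ℝ) - z i) ^ β i :=
  tsum_eq_sum (fun ξ h => by rw [hT ξ h, zero_mul])

lemma MB_continuous {ζ : Euc d → ℝ} (hζc : Continuous ζ) {R : ℝ}
    (hR : ∀ y, ζ y ≠ 0 → ‖y‖ ≤ R) (β : Fin d → ℕ) : Continuous (MB ζ β) := by
  rw [continuous_iff_continuousAt]
  intro z₀
  have hfin : {ξ : ZLat d | latCast ξ ∈ Metric.closedBall z₀ (R + 1)}.Finite :=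
    finite_lat Metric.isBounded_closedBall
  set T := hfin.toFinset with hTdef
  have hev : ∀ z ∈ Metric.ball z₀ 1,
      MB ζ β z = ∑ ξ ∈ T, ζ (z - latCast ξ) * ∏ i, ((ξ i : ℝ) - z i) ^ β i := by
    intro z hz
    apply MB_eq_sum
    intro ξ hξ
    by_contra h0
    apply hξ
    rw [hTdef, Set.Finite.mem_toFinset, Set.mem_setOf_eq, Metric.mem_closedBall, dist_eq_norm]
    have h1 : ‖z - latCast ξ‖ ≤ R := hR _ h0
    have h2 : ‖z₀ - z‖ < 1 := by
      rw [Metric.mem_ball, dist_eq_norm] at hz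
      rw [← norm_neg, neg_sub]; exact hz
    calc ‖latCast ξ - z₀‖ = ‖-(z - latCast ξ) - (z₀ - z)‖ := by congr 1; abel
    _ ≤ ‖-(z - latCast ξ)‖ + ‖z₀ - z‖ := norm_sub_le _ _
    _ = ‖z - latCast ξ‖ + ‖z₀ - z‖ := by rw [norm_neg]
    _ ≤ R + 1 := by linarith
  have hcont : Continuous (fun z : Euc d =>
      ∑ ξ ∈ T, ζ (z - latCast ξ) * ∏ i, ((ξ i : ℝ) - z i) ^ β i) := by
    apply continuous_finset_sum
    intro ξ _
    exact (hζc.comp (continuous_id.sub continuous_const)).mul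
      (continuous_finset_prod _ fun i _ => (continuous_const.sub (PiLp.continuous_apply 2 (fun _ : Fin d => ℝ) i)).pow _)
  apply ContinuousAt.congr hcont.continuousAt
  exact Filter.eventuallyEq_of_mem (Metric.ball_mem_nhds z₀ one_pos)
    (fun z hz => (hev z hz).symm)

lemma MB_periodic (ζ : Euc d → ℝ) (β : Fin d → ℕ) (η : ZLat d) (z : Euc d) :
    MB ζ β (z + latCast η) = MB ζ β z := by
  unfold MB
  rw [← Equiv.tsum_eq (Equiv.addRight η)
    (fun ξ => ζ (z + latCast η - latCast ξ) * ∏ i, ((ξ i : ℝ) - (z + latCast η) i) ^ β i)]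
  apply tsum_congr
  intro c
  have e0 : (Equiv.addRight η) c = c + η := rfl
  rw [e0]
  have e1 : z + latCast η - latCast (c + η) = z - latCast c := by
    rw [latCast_add]; abel
  rw [e1]
  congr 1
  apply Finset.prod_congr rfl
  intro i _
  have e2 : (((c + η) i : ℤ) : ℝ) = (c i : ℝ) + (η i : ℝ) := by
    rw [Pi.add_apply]; push_cast; ring
  have e3 : (z + latCast η) i = z i + (η i : ℝ) := by
    rw [PiLp.add_apply, latCast_apply]
  rw [e2, e3]
  ring_nf

lemma MB_periodic_sub (ζ : Euc d → ℝ) (β : Fin d → ℕ) (η : ZLat d) (z : Euc d) :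
    MB ζ β (z - latCast η) = MB ζ β z := by
  have := MB_periodic ζ β (-η) z
  rwa [latCast_neg, ← sub_eq_add_neg] at this

lemma MB_zero {ζ : Euc d → ℝ} (hζ : IsZ123 ζ) (z : Euc d) : MB ζ (fun _ => 0) z = 1 := by
  unfold MB
  simp only [pow_zero, Finset.prod_const_one, mul_one]
  exact tsum_zeta hζ z

/-! ### natural number index lemmas -/

lemma sum_eq_zero_all {δ : Fin d → ℕ} (h : ∑ i, δ i = 0) : ∀ i, δ i = 0 := by
  intro i
  exact Finset.sum_eq_zero_iff.mp h i (Finset.mem_univ i)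

lemma sum_eq_one_ex {δ : Fin d → ℕ} (h : ∑ i, δ i = 1) :
    ∃ i₀, δ i₀ = 1 ∧ ∀ j, j ≠ i₀ → δ j = 0 := by
  have hex : ∃ i₀, δ i₀ ≠ 0 := by
    by_contra h0
    push_neg at h0
    rw [Finset.sum_eq_zero (fun i _ => h0 i)] at h
    exact one_ne_zero h.symm
  obtain ⟨i₀, hi₀⟩ := hex
  have h1 : δ i₀ ≤ 1 := by
    rw [← h]
    exact Finset.single_le_sum (fun i _ => Nat.zero_le _) (Finset.mem_univ i₀)
  have h2 : δ i₀ = 1 := by omega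
  refine ⟨i₀, h2, ?_⟩
  intro j hj
  have h3 := Finset.sum_erase_add Finset.univ δ (Finset.mem_univ i₀)
  have h4 : ∑ x ∈ Finset.univ.erase i₀, δ x = 0 := by omega
  exact Finset.sum_eq_zero_iff.mp h4 j (Finset.mem_erase.mpr ⟨hj, Finset.mem_univ j⟩)

lemma MB_single {ζ : Euc d → ℝ} (hζ : IsZ123 ζ) {R : ℝ} (hR : ∀ y, ζ y ≠ 0 → ‖y‖ ≤ R)
    {β : Fin d → ℕ} (hβ : ∑ i, β i = 1) (z : Euc d) : MB ζ β z = 0 := by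
  obtain ⟨i₀, hi₀, hrest⟩ := sum_eq_one_ex hβ
  have hprod : ∀ ξ : ZLat d, ∏ i, ((ξ i : ℝ) - z i) ^ β i = (ξ i₀ : ℝ) - z i₀ := by
    intro ξ
    rw [Finset.prod_eq_single i₀ (fun j _ hj => by rw [hrest j hj, pow_zero])
      (fun h => absurd (Finset.mem_univ i₀) h), hi₀, pow_one]
  unfold MB
  rw [tsum_congr (fun ξ => by rw [hprod ξ])]
  obtain ⟨T, hT⟩ := support_finset_sub hR z
  have hs1 : Summable (fun ξ : ZLat d => ζ (z - latCast ξ) * (ξ i₀ : ℝ)) :=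
    summable_of_ne_finset_zero (s := T) (fun ξ h => by rw [hT ξ h, zero_mul])
  have hs2 : Summable (fun ξ : ZLat d => ζ (z - latCast ξ) * z i₀) :=
    summable_of_ne_finset_zero (s := T) (fun ξ h => by rw [hT ξ h, zero_mul])
  have hsplit : ∀ ξ : ZLat d, ζ (z - latCast ξ) * ((ξ i₀ : ℝ) - z i₀)
      = ζ (z - latCast ξ) * (ξ i₀ : ℝ) - ζ (z - latCast ξ) * z i₀ := fun ξ => by ring
  have hmr : ∑' ξ : ZLat d, ζ (z - latCast ξ) * z i₀
      = (∑' ξ : ZLat d, ζ (z - latCast ξ)) * z i₀ := tsum_mul_right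
  rw [tsum_congr hsplit, hs1.tsum_sub hs2, tsum_zeta_coord hζ z i₀, hmr,
    tsum_zeta hζ z, one_mul, sub_self]

/-! ### affine functions -/

def Aff (f : Euc d → ℝ) : Prop := ∃ c : ℝ, ∃ g : Fin d → ℝ, ∀ x, f x = c + ∑ i, g i * x i

lemma aff_congr {f f' : Euc d → ℝ} (h : ∀ x, f x = f' x) (hf : Aff f') : Aff f := by
  obtain ⟨c, g, hg⟩ := hf
  exact ⟨c, g, fun x => (h x).trans (hg x)⟩

lemma aff_const (k : ℝ) : Aff (fun _ : Euc d => k) :=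
  ⟨k, 0, fun x => by simp⟩

lemma aff_add {f g : Euc d → ℝ} (hf : Aff f) (hg : Aff g) : Aff (fun x => f x + g x) := by
  obtain ⟨c1, g1, h1⟩ := hf
  obtain ⟨c2, g2, h2⟩ := hg
  refine ⟨c1 + c2, fun i => g1 i + g2 i, fun x => ?_⟩
  show f x + g x = c1 + c2 + ∑ i, (g1 i + g2 i) * x i
  rw [h1 x, h2 x]
  rw [show ∑ i, (g1 i + g2 i) * x i = ∑ i, (g1 i * x i + g2 i * x i) from
    Finset.sum_congr rfl (fun i _ => by ring), Finset.sum_add_distrib]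
  ring

lemma aff_sum {ι : Type*} (s : Finset ι) (F : ι → Euc d → ℝ) (h : ∀ i ∈ s, Aff (F i)) :
    Aff (fun x => ∑ i ∈ s, F i x) := by
  classical
  induction s using Finset.induction_on with
  | empty => exact aff_congr (fun x => by simp) (aff_const 0)
  | insert a s hnotmem ih =>
    have h1 : Aff (F a) := h a (Finset.mem_insert_self a s)
    have h2 : Aff (fun x => ∑ i ∈ s, F i x) :=
      ih (fun i hi => h i (Finset.mem_insert_of_mem hi))
    exact aff_congr (fun x => Finset.sum_insert hnotmem) (aff_add h1 h2)

lemma aff_mono (k : ℝ) (δ : Fin d → ℕ) (hδ : ∑ i, δ i ≤ 1) :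
    Aff (fun x : Euc d => k * ∏ i, x i ^ δ i) := by
  rcases Nat.le_one_iff_eq_zero_or_eq_one.mp hδ with h | h
  · have hz := sum_eq_zero_all h
    apply aff_congr (f' := fun _ => k)
    · intro x
      rw [Finset.prod_congr rfl (fun i _ => by rw [hz i, pow_zero]), Finset.prod_const_one,
        mul_one]
    · exact aff_const k
  · obtain ⟨i₀, hi₀, hrest⟩ := sum_eq_one_ex h
    refine ⟨0, fun j => if j = i₀ then k else 0, fun x => ?_⟩
    show k * ∏ i, x i ^ δ i = 0 + ∑ j, (if j = i₀ then k else 0) * x j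
    rw [Finset.prod_eq_single i₀ (fun j _ hj => by rw [hrest j hj, pow_zero])
      (fun hc => absurd (Finset.mem_univ i₀) hc), hi₀, pow_one]
    have hsimp : ∀ j, (if j = i₀ then k else 0) * x j = if j = i₀ then k * x j else 0 :=
      fun j => by split <;> simp
    rw [Finset.sum_congr rfl (fun j _ => hsimp j),
      Finset.sum_ite_eq' Finset.univ i₀ (fun j => k * x j), if_pos (Finset.mem_univ i₀), zero_add]

/-! ### binomial expansion -/

lemma binom_expand (ν : Fin d → ℕ) (s z : Fin d → ℝ) :
    ∏ i, s i ^ ν i = ∑ β ∈ Fintype.piFinset (fun i => Finset.range (ν i + 1)),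
      (∏ i, ((ν i).choose (β i) : ℝ)) * (∏ i, z i ^ (ν i - β i)) * ∏ i, (s i - z i) ^ β i := by
  have h1 : ∀ i, s i ^ ν i
      = ∑ b ∈ Finset.range (ν i + 1), (s i - z i) ^ b * z i ^ (ν i - b) * ((ν i).choose b : ℝ) := by
    intro i
    rw [← add_pow]
    congr 1
    ring
  rw [Finset.prod_congr rfl (fun i _ => h1 i), Finset.prod_univ_sum]
  apply Finset.sum_congr rfl
  intro β _
  rw [show ∀ (f g h : Fin d → ℝ), ∏ i, (f i * g i * h i) = (∏ i, f i) * (∏ i, g i) * ∏ i, h i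
    from fun f g h => by rw [Finset.prod_mul_distrib, Finset.prod_mul_distrib]]
  ring

end QIAux
namespace QIAux

variable {d : ℕ}

lemma convAuto_shift (ζ : Euc d → ℝ) (x v : Euc d) :
    convAuto ζ (x - v) = ∫ z, ζ (x - z) * ζ (z - v) := by
  unfold convAuto
  have h := MeasureTheory.integral_sub_right_eq_self (μ := volume) (fun y => ζ (x - v - y) * ζ y) v
  rw [← h]
  apply integral_congr_ae
  apply Filter.EventuallyEq.of_eq
  funext z
  have e1 : x - v - (z - v) = x - z := by abel
  rw [e1]

lemma convAuto_eq_zero {ζ : Euc d → ℝ} {R : ℝ} (hR : ∀ y, ζ y ≠ 0 → ‖y‖ ≤ R)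
    {w : Euc d} (hw : ¬ ‖w‖ ≤ 2 * R) : convAuto ζ w = 0 := by
  unfold convAuto
  have h : ∀ y : Euc d, ζ (w - y) * ζ y = 0 := by
    intro y
    by_cases h1 : ζ y = 0
    · rw [h1, mul_zero]
    by_cases h2 : ζ (w - y) = 0
    · rw [h2, zero_mul]
    exfalso
    apply hw
    calc ‖w‖ = ‖(w - y) + y‖ := by congr 1; abel
    _ ≤ ‖w - y‖ + ‖y‖ := norm_add_le _ _
    _ ≤ 2 * R := by linarith [hR _ h1, hR _ h2]
  rw [show (fun y => ζ (w - y) * ζ y) = fun _ => (0:ℝ) from funext h]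
  exact MeasureTheory.integral_zero _ _

/-- The master lemma: for a single monomial of degree at most 3, the quasi-interpolation
with `ζ ∗ ζ` reproduces the monomial up to an affine function. -/
lemma master (ζ : Euc d → ℝ) (hζ : IsZ123 ζ) (ν : Fin d → ℕ) (hν : ∑ i, ν i ≤ 3) :
    ∃ c : ℝ, ∃ g : Fin d → ℝ, ∀ x : Euc d,
      ∑' ξ : ZLat d, (∏ i, (ξ i : ℝ) ^ ν i) * convAuto ζ (x - latCast ξ)
        = (∏ i, x i ^ ν i) + (c + ∑ i, g i * x i) := by
  classical
  have hζc : Continuous ζ := hζ.lip.choose_spec.continuous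
  obtain ⟨R, hR0, hR⟩ := radius_of_cpt hζ.cpt
  -- index sets and coefficients
  set B : Finset (Fin d → ℕ) := Fintype.piFinset (fun i => Finset.range (ν i + 1)) with hBdef
  set B' : (Fin d → ℕ) → Finset (Fin d → ℕ) :=
    fun β => Fintype.piFinset (fun i => Finset.range (ν i - β i + 1)) with hB'def
  set CC : (Fin d → ℕ) → (Fin d → ℕ) → ℝ :=
    fun μ β => ∏ i, ((μ i).choose (β i) : ℝ) with hCCdef
  set N : (Fin d → ℕ) → (Fin d → ℕ) → Euc d → ℝ :=
    fun β γ x => ∫ z, ζ (x - z) * ((∏ i, (z i - x i) ^ γ i) * MB ζ β z) with hNdef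
  set gg : (Fin d → ℕ) → Euc d → ℝ :=
    fun γ y => ζ y * ∏ i, (-(y i)) ^ γ i with hggdef
  set kf : (Fin d → ℕ) → (Fin d → ℕ) → ℝ := fun β γ =>
    if ∑ i, γ i ≤ 1 then
      (if ∑ i, γ i = 0 then ∫ u in cell (0 : ZLat d), MB ζ β u else 0)
    else (if ∑ i, β i = 0 then ∫ y, gg γ y else 0) with hkfdef
  have hMBc : ∀ β, Continuous (MB ζ β) := fun β => MB_continuous hζc hR β
  have hggc : ∀ γ, Continuous (gg γ) := by
    intro γ
    exact hζc.mul (continuous_finset_prod _ fun i _ => ((PiLp.continuous_apply 2 (fun _ : Fin d => ℝ) i).neg.pow _))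
  have hggs : ∀ γ, HasCompactSupport (gg γ) := by
    intro γ
    exact hζ.cpt.mul_right
  have hIζF : ∀ (x : Euc d) (F : Euc d → ℝ), Continuous F →
      Integrable (fun z => ζ (x - z) * F z) :=
    fun x F hF => integrable_cutoff hζc hζ.cpt x hF
  -- rewrite N as a convolution against the periodic function MB
  have hNsub : ∀ β γ (x : Euc d), N β γ x = ∫ y, gg γ y * MB ζ β (x - y) := by
    intro β γ x
    have hfe : (fun z => ζ (x - z) * ((∏ i, (z i - x i) ^ γ i) * MB ζ β z))
        = fun z => (fun y => gg γ y * MB ζ β (x - y)) (x - z) := by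
      funext z
      have e1 : x - (x - z) = z := _root_.sub_sub_cancel x z
      have e2 : ∀ i, -((x - z) i) = z i - x i := by
        intro i
        rw [PiLp.sub_apply]; ring
      show ζ (x - z) * ((∏ i, (z i - x i) ^ γ i) * MB ζ β z)
          = ζ (x - z) * (∏ i, (-((x - z) i)) ^ γ i) * MB ζ β (x - (x - z))
      have e3 : (∏ i, (-((x - z) i)) ^ γ i) = ∏ i, (z i - x i) ^ γ i :=
        Finset.prod_congr rfl (fun i _ => by rw [e2 i])
      rw [e1, e3]
      ring
    show (∫ z, ζ (x - z) * ((∏ i, (z i - x i) ^ γ i) * MB ζ β z)) = _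
    rw [hfe, integral_comp_sub (fun y => gg γ y * MB ζ β (x - y)) x]
  -- N is constant, equal to kf
  have hNconst : ∀ β γ, ∑ i, β i + ∑ i, γ i ≤ 3 → ∀ x : Euc d, N β γ x = kf β γ := by
    intro β γ hle x
    rw [hNsub]
    by_cases hγ : ∑ i, γ i ≤ 1
    · rcases Nat.le_one_iff_eq_zero_or_eq_one.mp hγ with h0 | h1
      · -- γ ≡ 0 : periodization of ζ is 1
        have hgg0 : ∀ y, gg γ y = ζ y := by
          intro y
          show ζ y * ∏ i, (-(y i)) ^ γ i = ζ y
          rw [Finset.prod_congr rfl (fun i _ => by rw [sum_eq_zero_all h0 i, pow_zero]),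
            Finset.prod_const_one, mul_one]
        rw [show (fun y => gg γ y * MB ζ β (x - y)) = fun y => ζ y * MB ζ β (x - y) from
          funext (fun y => by rw [hgg0 y])]
        rw [conv_periodic_const (hMBc β) (MB_periodic ζ β) hζc hζ.cpt 1
          (tsum_zeta_shift hζ) x, one_mul]
        rw [hkfdef]
        simp only [if_pos hγ, if_pos h0]
      · -- ∑ γ = 1 : periodization of y ζ(y) is 0
        obtain ⟨i₀, hi₀, hrest⟩ := sum_eq_one_ex h1
        have hgg1 : ∀ y : Euc d, gg γ y = ζ y * (-(y i₀)) := by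
          intro y
          show ζ y * ∏ i, (-(y i)) ^ γ i = ζ y * (-(y i₀))
          rw [Finset.prod_eq_single i₀ (fun j _ hj => by rw [hrest j hj, pow_zero])
            (fun hc => absurd (Finset.mem_univ i₀) hc), hi₀, pow_one]
        have hper0 : ∀ u : Euc d, ∑' ξ : ZLat d, (fun y : Euc d => ζ y * (-(y i₀))) (u + latCast ξ) = 0 := by
          intro u
          obtain ⟨S, hS⟩ := support_finset hR u
          have hsum1 : Summable (fun ξ : ZLat d => (-(u i₀)) * ζ (u + latCast ξ)) :=
            summable_of_ne_finset_zero (s := S) (fun ξ h => by rw [hS ξ h, mul_zero])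
          have hsum2 : Summable (fun ξ : ZLat d => ζ (u + latCast ξ) * (ξ i₀ : ℝ)) :=
            summable_of_ne_finset_zero (s := S) (fun ξ h => by rw [hS ξ h, zero_mul])
          have hco : ∀ ξ : ZLat d, (fun y : Euc d => ζ y * (-(y i₀))) (u + latCast ξ)
              = (-(u i₀)) * ζ (u + latCast ξ) - ζ (u + latCast ξ) * (ξ i₀ : ℝ) := by
            intro ξ
            show ζ (u + latCast ξ) * (-((u + latCast ξ) i₀)) = _
            rw [PiLp.add_apply, latCast_apply]
            ring
          rw [tsum_congr hco, hsum1.tsum_sub hsum2, _root_.tsum_mul_left, tsum_zeta_shift hζ,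
            tsum_zeta_coord_shift hζ u i₀, mul_one]
          ring
        rw [show (fun y => gg γ y * MB ζ β (x - y))
            = fun y => (fun w : Euc d => ζ w * (-(w i₀))) y * MB ζ β (x - y) from
          funext (fun y => by rw [hgg1 y])]
        rw [conv_periodic_const (g := fun w : Euc d => ζ w * (-(w i₀))) (hMBc β) (MB_periodic ζ β)
          (hζc.mul ((PiLp.continuous_apply 2 (fun _ : Fin d => ℝ) i₀).neg) : Continuous fun w : Euc d => ζ w * (-(w i₀))) hζ.cpt.mul_right 0 hper0 x, zero_mul]
        rw [hkfdef]
        simp only [if_pos hγ, if_neg (by omega : ¬ ∑ i, γ i = 0)]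
    · -- ∑ γ ≥ 2, hence ∑ β ≤ 1
      have hβ1 : ∑ i, β i ≤ 1 := by omega
      rcases Nat.le_one_iff_eq_zero_or_eq_one.mp hβ1 with h0 | h1
      · -- β ≡ 0 : MB ≡ 1
        have hMB1 : ∀ z, MB ζ β z = 1 := by
          intro z
          unfold MB
          rw [tsum_congr (fun ξ => by
            rw [Finset.prod_congr rfl (fun i (_ : i ∈ Finset.univ) => by
              rw [sum_eq_zero_all h0 i, pow_zero]), Finset.prod_const_one, mul_one])]
          exact tsum_zeta hζ z
        rw [show (fun y => gg γ y * MB ζ β (x - y)) = fun y => gg γ y from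
          funext (fun y => by rw [hMB1 (x - y), mul_one])]
        rw [hkfdef]
        simp only [if_neg hγ, if_pos h0]
      · -- ∑ β = 1 : MB ≡ 0
        have hMB0 : ∀ z, MB ζ β z = 0 := fun z => MB_single hζ hR h1 z
        rw [show (fun y => gg γ y * MB ζ β (x - y)) = fun _ => (0:ℝ) from
          funext (fun y => by rw [hMB0 (x - y), mul_zero])]
        rw [MeasureTheory.integral_zero, hkfdef]
        simp only [if_neg hγ, if_neg (by omega : ¬ ∑ i, β i = 0)]
  -- memberships give the degree bound
  have hdeg : ∀ β ∈ B, ∀ γ ∈ B' β, ∑ i, β i + ∑ i, γ i ≤ 3 := by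
    intro β hβ γ hγ
    rw [hBdef, Fintype.mem_piFinset] at hβ
    rw [hB'def, Fintype.mem_piFinset] at hγ
    have h1 : ∀ i, β i + γ i ≤ ν i := by
      intro i
      have b1 := Finset.mem_range.mp (hβ i)
      have b2 := Finset.mem_range.mp (hγ i)
      omega
    calc ∑ i, β i + ∑ i, γ i = ∑ i, (β i + γ i) := by rw [Finset.sum_add_distrib]
    _ ≤ ∑ i, ν i := Finset.sum_le_sum (fun i _ => h1 i)
    _ ≤ 3 := hν
  -- the main computation
  have hmain : ∀ x : Euc d,
      ∑' ξ : ZLat d, (∏ i, (ξ i : ℝ) ^ ν i) * convAuto ζ (x - latCast ξ)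
      = ∑ β ∈ B, ∑ γ ∈ B' β,
          CC ν β * (CC (fun i => ν i - β i) γ * ((∏ i, x i ^ (ν i - β i - γ i)) * kf β γ)) := by
    intro x
    have hfinT : {ξ : ZLat d | latCast ξ ∈ Metric.closedBall x (2 * R + 1)}.Finite :=
      finite_lat Metric.isBounded_closedBall
    set T := hfinT.toFinset with hTdef
    have hTmem : ∀ ξ : ZLat d, ‖x - latCast ξ‖ ≤ 2 * R → ξ ∈ T := by
      intro ξ h
      rw [hTdef, Set.Finite.mem_toFinset, Set.mem_setOf_eq, Metric.mem_closedBall,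
        dist_eq_norm]
      rw [← norm_neg, neg_sub]
      linarith
    have stepA : ∑' ξ : ZLat d, (∏ i, (ξ i : ℝ) ^ ν i) * convAuto ζ (x - latCast ξ)
        = ∑ ξ ∈ T, (∏ i, (ξ i : ℝ) ^ ν i) * convAuto ζ (x - latCast ξ) := by
      apply tsum_eq_sum
      intro ξ hξ
      rw [convAuto_eq_zero hR (fun hc => hξ (hTmem ξ hc)), mul_zero]
    have stepB : ∀ ξ : ZLat d, (∏ i, (ξ i : ℝ) ^ ν i) * convAuto ζ (x - latCast ξ)
        = ∫ z, ζ (x - z) * ((∏ i, (ξ i : ℝ) ^ ν i) * ζ (z - latCast ξ)) := by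
      intro ξ
      rw [convAuto_shift ζ x (latCast ξ), ← MeasureTheory.integral_const_mul]
      exact integral_congr_ae (Filter.EventuallyEq.of_eq (funext fun z => by ring))
    have stepC : ∑ ξ ∈ T, (∏ i, (ξ i : ℝ) ^ ν i) * convAuto ζ (x - latCast ξ)
        = ∫ z, ∑ ξ ∈ T, ζ (x - z) * ((∏ i, (ξ i : ℝ) ^ ν i) * ζ (z - latCast ξ)) := by
      rw [Finset.sum_congr rfl (fun ξ _ => stepB ξ)]
      exact (MeasureTheory.integral_finset_sum T (fun ξ _ => hIζF x _
        (continuous_const.mul (hζc.comp (continuous_id.sub continuous_const))))).symm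
    set G : Euc d → ℝ := fun z => ∑' ξ : ZLat d, (∏ i, (ξ i : ℝ) ^ ν i) * ζ (z - latCast ξ)
      with hGdef
    have stepD : ∀ z : Euc d, ∑ ξ ∈ T, ζ (x - z) * ((∏ i, (ξ i : ℝ) ^ ν i) * ζ (z - latCast ξ))
        = ζ (x - z) * G z := by
      intro z
      rw [← Finset.mul_sum]
      by_cases hz0 : ζ (x - z) = 0
      · rw [hz0, zero_mul, zero_mul]
      congr 1
      rw [hGdef]
      symm
      apply tsum_eq_sum
      intro ξ hξ
      by_cases hz1 : ζ (z - latCast ξ) = 0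
      · rw [hz1, mul_zero]
      exfalso
      apply hξ
      apply hTmem
      calc ‖x - latCast ξ‖ = ‖(x - z) + (z - latCast ξ)‖ := by congr 1; abel
      _ ≤ ‖x - z‖ + ‖z - latCast ξ‖ := norm_add_le _ _
      _ ≤ 2 * R := by linarith [hR _ hz0, hR _ hz1]
    have stepE : ∀ z : Euc d, G z
        = ∑ β ∈ B, CC ν β * ((∏ i, z i ^ (ν i - β i)) * MB ζ β z) := by
      intro z
      obtain ⟨S, hS⟩ := support_finset_sub hR z
      have e1 : G z = ∑ ξ ∈ S, (∏ i, (ξ i : ℝ) ^ ν i) * ζ (z - latCast ξ) := by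
        rw [hGdef]
        exact tsum_eq_sum (fun ξ h => by rw [hS ξ h, mul_zero])
      rw [e1]
      have e2 : ∀ ξ ∈ S, (∏ i, (ξ i : ℝ) ^ ν i) * ζ (z - latCast ξ)
          = ∑ β ∈ B, (CC ν β * (∏ i, z i ^ (ν i - β i)))
              * (ζ (z - latCast ξ) * ∏ i, ((ξ i : ℝ) - z i) ^ β i) := by
        intro ξ _
        rw [binom_expand ν (fun i => (ξ i : ℝ)) (fun i => z i)]
        rw [Finset.sum_mul]
        apply Finset.sum_congr rfl
        intro β _
        rw [hCCdef]
        ring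
      rw [Finset.sum_congr rfl e2, Finset.sum_comm]
      apply Finset.sum_congr rfl
      intro β _
      rw [← Finset.mul_sum, ← MB_eq_sum hS]
      ring
    have stepF : ∫ z, ζ (x - z) * G z
        = ∑ β ∈ B, CC ν β * ∫ z, ζ (x - z) * ((∏ i, z i ^ (ν i - β i)) * MB ζ β z) := by
      have e3 : (fun z => ζ (x - z) * G z) = fun z =>
          ∑ β ∈ B, CC ν β * (ζ (x - z) * ((∏ i, z i ^ (ν i - β i)) * MB ζ β z)) := by
        funext z
        rw [stepE z, Finset.mul_sum]
        apply Finset.sum_congr rfl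
        intro β _
        ring
      rw [e3, MeasureTheory.integral_finset_sum B (fun β _ =>
        ((hIζF x (fun z => (∏ i, z i ^ (ν i - β i)) * MB ζ β z) ((continuous_finset_prod _ fun i _ =>
          (PiLp.continuous_apply 2 (fun _ : Fin d => ℝ) i).pow _).mul (hMBc β))).const_mul _))]
      apply Finset.sum_congr rfl
      intro β _
      rw [MeasureTheory.integral_const_mul]
    have stepG : ∀ β ∈ B, ∫ z, ζ (x - z) * ((∏ i, z i ^ (ν i - β i)) * MB ζ β z)
        = ∑ γ ∈ B' β, CC (fun i => ν i - β i) γ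
            * ((∏ i, x i ^ (ν i - β i - γ i)) * N β γ x) := by
      intro β _
      have e4 : (fun z => ζ (x - z) * ((∏ i, z i ^ (ν i - β i)) * MB ζ β z)) = fun z =>
          ∑ γ ∈ B' β, (CC (fun i => ν i - β i) γ * (∏ i, x i ^ (ν i - β i - γ i)))
            * (ζ (x - z) * ((∏ i, (z i - x i) ^ γ i) * MB ζ β z)) := by
        funext z
        rw [binom_expand (fun i => ν i - β i) (fun i => z i) (fun i => x i)]
        rw [Finset.sum_mul, Finset.mul_sum]
        apply Finset.sum_congr rfl
        intro γ _
        rw [hCCdef]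
        ring
      rw [e4, MeasureTheory.integral_finset_sum (B' β) (fun γ _ =>
        ((hIζF x (fun z => (∏ i, (z i - x i) ^ γ i) * MB ζ β z) ((continuous_finset_prod _ fun i _ =>
          ((PiLp.continuous_apply 2 (fun _ : Fin d => ℝ) i).sub continuous_const).pow _).mul (hMBc β))).const_mul _))]
      apply Finset.sum_congr rfl
      intro γ _
      rw [MeasureTheory.integral_const_mul, hNdef]
      ring
    rw [stepA, stepC]
    rw [show (fun z => ∑ ξ ∈ T, ζ (x - z) * ((∏ i, (ξ i : ℝ) ^ ν i) * ζ (z - latCast ξ)))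
        = fun z => ζ (x - z) * G z from funext stepD]
    rw [stepF]
    apply Finset.sum_congr rfl
    intro β hβ
    rw [stepG β hβ, Finset.mul_sum]
    apply Finset.sum_congr rfl
    intro γ hγ
    rw [hNconst β γ (hdeg β hβ γ hγ) x]
  -- Now the affine analysis of the right-hand side.
  set z0 : Fin d → ℕ := fun _ => 0 with hz0def
  have hz0B : z0 ∈ B := by
    rw [hBdef, Fintype.mem_piFinset]
    intro i
    rw [Finset.mem_range]
    have h0 : z0 i = 0 := rfl
    omega
  have hz0B' : z0 ∈ B' z0 := by
    rw [hB'def, Fintype.mem_piFinset]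
    intro i
    rw [Finset.mem_range]
    have h0 : z0 i = 0 := rfl
    omega
  set TERM : (Fin d → ℕ) → (Fin d → ℕ) → Euc d → ℝ := fun β γ x =>
    CC ν β * (CC (fun i => ν i - β i) γ * ((∏ i, x i ^ (ν i - β i - γ i)) * kf β γ))
    with hTERMdef
  have hkf00 : kf z0 z0 = 1 := by
    simp only [hkfdef]
    have h1 : ∑ i, z0 i = 0 := by simp [hz0def]
    rw [if_pos (show ∑ i, z0 i ≤ 1 by rw [h1]; exact Nat.zero_le 1), if_pos h1]
    rw [MeasureTheory.setIntegral_congr_fun (measurableSet_cell (0 : ZLat d))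
      (fun u _ => MB_zero hζ u)]
    rw [MeasureTheory.setIntegral_const, measureReal_def, volume_cell0]
    simp
  have h00 : ∀ x : Euc d, TERM z0 z0 x = ∏ i, x i ^ ν i := by
    intro x
    rw [hTERMdef]
    show CC ν z0 * (CC (fun i => ν i - z0 i) z0 * ((∏ i, x i ^ (ν i - z0 i - z0 i)) * kf z0 z0))
      = ∏ i, x i ^ ν i
    have hC1 : CC ν z0 = 1 := by
      rw [hCCdef]
      show ∏ i, (((ν i).choose (z0 i) : ℕ) : ℝ) = 1
      rw [Finset.prod_congr rfl (fun i (_ : i ∈ Finset.univ) => by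
        rw [show z0 i = 0 from rfl, Nat.choose_zero_right, Nat.cast_one]),
        Finset.prod_const_one]
    have hC2 : CC (fun i => ν i - z0 i) z0 = 1 := by
      rw [hCCdef]
      show ∏ i, (((ν i - z0 i).choose (z0 i) : ℕ) : ℝ) = 1
      rw [Finset.prod_congr rfl (fun i (_ : i ∈ Finset.univ) => by
        rw [show z0 i = 0 from rfl, Nat.choose_zero_right, Nat.cast_one]),
        Finset.prod_const_one]
    rw [hC1, hC2, hkf00]
    have hpow : ∀ i, ν i - z0 i - z0 i = ν i := fun i => by
      rw [show z0 i = 0 from rfl]; omega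
    rw [Finset.prod_congr rfl (fun i (_ : i ∈ Finset.univ) => by rw [hpow i])]
    ring
  have hAff : ∀ β ∈ B, ∀ γ ∈ B' β, ¬(∑ i, β i = 0 ∧ ∑ i, γ i = 0) → Aff (TERM β γ) := by
    intro β hβ γ hγ hne
    have hle := hdeg β hβ γ hγ
    by_cases hs : 2 ≤ ∑ i, β i + ∑ i, γ i
    · -- the monomial has degree ≤ 1
      have hpowsum : ∑ i, (ν i - β i - γ i) ≤ 1 := by
        rw [hBdef, Fintype.mem_piFinset] at hβ
        rw [hB'def, Fintype.mem_piFinset] at hγ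
        have h1 : ∀ i, (ν i - β i - γ i) + (β i + γ i) = ν i := by
          intro i
          have b1 := Finset.mem_range.mp (hβ i)
          have b2 := Finset.mem_range.mp (hγ i)
          omega
        have h2 : ∑ i, ((ν i - β i - γ i) + (β i + γ i)) = ∑ i, ν i :=
          Finset.sum_congr rfl (fun i _ => h1 i)
        rw [Finset.sum_add_distrib, Finset.sum_add_distrib] at h2
        omega
      apply aff_congr (f' := fun x =>
        (CC ν β * (CC (fun i => ν i - β i) γ * kf β γ)) * ∏ i, x i ^ (ν i - β i - γ i))
      · intro x; rw [hTERMdef]; ring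
      · exact aff_mono _ _ hpowsum
    · -- low order term: kf vanishes
      have hkf0 : kf β γ = 0 := by
        simp only [hkfdef]
        by_cases hγ1 : ∑ i, γ i = 0
        · have hβ1 : ∑ i, β i = 1 := by omega
          rw [if_pos (show ∑ i, γ i ≤ 1 by rw [hγ1]; exact Nat.zero_le 1), if_pos hγ1]
          rw [MeasureTheory.setIntegral_congr_fun (measurableSet_cell (0 : ZLat d))
            (fun u _ => MB_single hζ hR hβ1 u)]
          exact MeasureTheory.integral_zero _ _
        · have hγ2 : ∑ i, γ i = 1 := by omega
          rw [if_pos (show ∑ i, γ i ≤ 1 by rw [hγ2]), if_neg hγ1]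
      apply aff_congr (f' := fun _ => (0:ℝ))
      · intro x; rw [hTERMdef]; show CC ν β * (CC _ γ * (_ * kf β γ)) = 0
        rw [hkf0]; ring
      · exact aff_const 0
  -- assemble
  have hsplit : ∀ x : Euc d,
      ∑ β ∈ B, ∑ γ ∈ B' β, TERM β γ x
      = TERM z0 z0 x + ((∑ γ ∈ (B' z0).erase z0, TERM z0 γ x)
          + ∑ β ∈ B.erase z0, ∑ γ ∈ B' β, TERM β γ x) := by
    intro x
    rw [← Finset.sum_erase_add B _ hz0B, ← Finset.sum_erase_add (B' z0) _ hz0B']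
    ring
  have hAffRest : Aff (fun x => (∑ γ ∈ (B' z0).erase z0, TERM z0 γ x)
      + ∑ β ∈ B.erase z0, ∑ γ ∈ B' β, TERM β γ x) := by
    apply aff_add
    · apply aff_sum
      intro γ hγ
      have hγ1 := Finset.mem_erase.mp hγ
      apply hAff z0 hz0B γ hγ1.2
      intro hc
      apply hγ1.1
      funext i
      exact sum_eq_zero_all hc.2 i
    · apply aff_sum
      intro β hβ
      have hβ1 := Finset.mem_erase.mp hβ
      apply aff_sum
      intro γ hγ
      apply hAff β hβ1.2 γ hγ
      intro hc
      apply hβ1.1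
      funext i
      exact sum_eq_zero_all hc.1 i
  obtain ⟨c, g, hcg⟩ := hAffRest
  refine ⟨c, g, fun x => ?_⟩
  rw [hmain x, hsplit x, h00 x, ← hcg x]

end QIAux
open QIAux in
/-- Lemma 5.4: if `ζ₁, ζ₂` satisfy (Z1)–(Z3) and `ζ̃ᵢ = ζᵢ ∗ ζᵢ`, then for
every polynomial `p` of total degree at most `3`, the function
`x ↦ ∑_{ξ∈ℤ^d} p(ξ)(ζ̃₂(x−ξ) − ζ̃₁(x−ξ))` is affine, i.e. of the form `c + g·x`. -/
theorem qinterp_basis_difference_affine (d : ℕ) (hd : 0 < d)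
    (ζ₁ ζ₂ : Euc d → ℝ) (h₁ : IsZ123 ζ₁) (h₂ : IsZ123 ζ₂)
    (P : MvPolynomial (Fin d) ℝ) (hP : P.totalDegree ≤ 3) :
    ∃ (c : ℝ) (g : Fin d → ℝ), ∀ x : Euc d,
      (∑' ξ : ZLat d, MvPolynomial.eval (fun i => (ξ i : ℝ)) P *
          (convAuto ζ₂ (x - latCast ξ) - convAuto ζ₁ (x - latCast ξ))) =
        c + ∑ i, g i * x i := by
  classical
  obtain ⟨R₁, hR₁0, hR₁⟩ := radius_of_cpt h₁.cpt
  obtain ⟨R₂, hR₂0, hR₂⟩ := radius_of_cpt h₂.cpt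
  have hdeg : ∀ n : Fin d →₀ ℕ, n ∈ P.support → ∑ i, n i ≤ 3 := by
    intro n hn
    have ha := MvPolynomial.le_totalDegree hn
    have hb : (n.sum fun _ e => e) = ∑ i, n i := Finsupp.sum_fintype _ _ (fun _ => rfl)
    rw [hb] at ha
    exact le_trans ha hP
  have H1 : ∀ n : Fin d →₀ ℕ, ∃ c : ℝ, ∃ g : Fin d → ℝ, n ∈ P.support → ∀ x : Euc d,
      ∑' ξ : ZLat d, (∏ i, (ξ i : ℝ) ^ n i) * convAuto ζ₁ (x - latCast ξ)
        = (∏ i, x i ^ n i) + (c + ∑ i, g i * x i) := by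
    intro n
    by_cases hn : n ∈ P.support
    · obtain ⟨c, g, h⟩ := master ζ₁ h₁ (fun i => n i) (hdeg n hn)
      exact ⟨c, g, fun _ => h⟩
    · exact ⟨0, 0, fun h => absurd h hn⟩
  have H2 : ∀ n : Fin d →₀ ℕ, ∃ c : ℝ, ∃ g : Fin d → ℝ, n ∈ P.support → ∀ x : Euc d,
      ∑' ξ : ZLat d, (∏ i, (ξ i : ℝ) ^ n i) * convAuto ζ₂ (x - latCast ξ)
        = (∏ i, x i ^ n i) + (c + ∑ i, g i * x i) := by
    intro n
    by_cases hn : n ∈ P.support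
    · obtain ⟨c, g, h⟩ := master ζ₂ h₂ (fun i => n i) (hdeg n hn)
      exact ⟨c, g, fun _ => h⟩
    · exact ⟨0, 0, fun h => absurd h hn⟩
  choose c1 g1 hc1 using H1
  choose c2 g2 hc2 using H2
  refine ⟨∑ n ∈ P.support, P.coeff n * (c2 n - c1 n),
    fun i => ∑ n ∈ P.support, P.coeff n * (g2 n i - g1 n i), fun x => ?_⟩
  have hfinT : {ξ : ZLat d | latCast ξ ∈ Metric.closedBall x (2*R₁ + 2*R₂ + 1)}.Finite :=
    finite_lat Metric.isBounded_closedBall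
  set T := hfinT.toFinset with hTdef
  have hT1 : ∀ ξ ∉ T, convAuto ζ₁ (x - latCast ξ) = 0 := by
    intro ξ hξ
    apply convAuto_eq_zero hR₁
    intro hc
    apply hξ
    rw [hTdef, Set.Finite.mem_toFinset, Set.mem_setOf_eq, Metric.mem_closedBall, dist_eq_norm,
      ← norm_neg, neg_sub]
    linarith
  have hT2 : ∀ ξ ∉ T, convAuto ζ₂ (x - latCast ξ) = 0 := by
    intro ξ hξ
    apply convAuto_eq_zero hR₂
    intro hc
    apply hξ
    rw [hTdef, Set.Finite.mem_toFinset, Set.mem_setOf_eq, Metric.mem_closedBall, dist_eq_norm,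
      ← norm_neg, neg_sub]
    linarith
  have step1 : ∑' ξ : ZLat d, MvPolynomial.eval (fun i => (ξ i : ℝ)) P *
      (convAuto ζ₂ (x - latCast ξ) - convAuto ζ₁ (x - latCast ξ))
      = ∑ ξ ∈ T, MvPolynomial.eval (fun i => (ξ i : ℝ)) P *
        (convAuto ζ₂ (x - latCast ξ) - convAuto ζ₁ (x - latCast ξ)) := by
    apply tsum_eq_sum
    intro ξ hξ
    rw [hT1 ξ hξ, hT2 ξ hξ, sub_zero, mul_zero]
  have step3 : ∀ (ζ : Euc d → ℝ) (cz : (Fin d →₀ ℕ) → ℝ) (gz : (Fin d →₀ ℕ) → Fin d → ℝ),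
      (∀ ξ ∉ T, convAuto ζ (x - latCast ξ) = 0) →
      (∀ n ∈ P.support, ∀ x : Euc d,
        ∑' ξ : ZLat d, (∏ i, (ξ i : ℝ) ^ n i) * convAuto ζ (x - latCast ξ)
          = (∏ i, x i ^ n i) + (cz n + ∑ i, gz n i * x i)) →
      ∑ ξ ∈ T, MvPolynomial.eval (fun i => (ξ i : ℝ)) P * convAuto ζ (x - latCast ξ)
      = ∑ n ∈ P.support, P.coeff n *
          ((∏ i, x i ^ n i) + (cz n + ∑ i, gz n i * x i)) := by
    intro ζ cz gz hT0 hcz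
    have e1 : ∀ ξ ∈ T, MvPolynomial.eval (fun i => (ξ i : ℝ)) P * convAuto ζ (x - latCast ξ)
        = ∑ n ∈ P.support, P.coeff n *
            ((∏ i, (ξ i : ℝ) ^ n i) * convAuto ζ (x - latCast ξ)) := by
      intro ξ _
      rw [MvPolynomial.eval_eq', Finset.sum_mul]
      apply Finset.sum_congr rfl
      intro n _
      ring
    rw [Finset.sum_congr rfl e1, Finset.sum_comm]
    apply Finset.sum_congr rfl
    intro n hn
    rw [← Finset.mul_sum]
    congr 1
    rw [← hcz n hn x]
    symm
    apply tsum_eq_sum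
    intro ξ hξ
    rw [hT0 ξ hξ, mul_zero]
  have s31 := step3 ζ₁ c1 g1 hT1 (fun n hn => hc1 n hn)
  have s32 := step3 ζ₂ c2 g2 hT2 (fun n hn => hc2 n hn)
  have step2 : ∑ ξ ∈ T, MvPolynomial.eval (fun i => (ξ i : ℝ)) P *
      (convAuto ζ₂ (x - latCast ξ) - convAuto ζ₁ (x - latCast ξ))
      = (∑ ξ ∈ T, MvPolynomial.eval (fun i => (ξ i : ℝ)) P * convAuto ζ₂ (x - latCast ξ))
        - ∑ ξ ∈ T, MvPolynomial.eval (fun i => (ξ i : ℝ)) P * convAuto ζ₁ (x - latCast ξ) := by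
    rw [← Finset.sum_sub_distrib]
    apply Finset.sum_congr rfl
    intro ξ _
    ring
  rw [step1, step2, s31, s32, ← Finset.sum_sub_distrib]
  have step4 : ∀ n ∈ P.support,
      P.coeff n * ((∏ i, x i ^ n i) + (c2 n + ∑ i, g2 n i * x i))
        - P.coeff n * ((∏ i, x i ^ n i) + (c1 n + ∑ i, g1 n i * x i))
      = P.coeff n * (c2 n - c1 n) + ∑ i, (P.coeff n * (g2 n i - g1 n i)) * x i := by
    intro n _
    have e2 : ∑ i, (P.coeff n * (g2 n i - g1 n i)) * x i
        = P.coeff n * ((∑ i, g2 n i * x i) - ∑ i, g1 n i * x i) := by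
      rw [← Finset.sum_sub_distrib, Finset.mul_sum]
      apply Finset.sum_congr rfl
      intro i _
      ring
    rw [e2]
    ring
  rw [Finset.sum_congr rfl step4, Finset.sum_add_distrib]
  congr 1
  rw [Finset.sum_comm]
  rw [Finset.sum_congr rfl (fun i (_ : i ∈ Finset.univ) => (Finset.sum_mul _ _ (x i)).symm)]
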